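/- arXiv:1410.7632 — 4 statements merged into one kernel-verified Lean document; each statement's English description precedes it below -/
import Mathlib

section
/- Let γ : ℝ → ℝ² be a twice continuously differentiable curve parameterized by arc length (i.e. ‖γ'(s)‖ = 1 for all s) whose curvature is bounded by κ ≥ 0 (i.e. ‖γ''(s)‖ ≤ κ for all s). Then for all s_i, s_j ∈ ℝ, the chord length satisfies ‖γ(s_j) − γ(s_i)‖ ≥ |s_j − s_i| − (κ/2)·(s_j − s_i)². -/
open Real Set
open scoped RealInnerProductSpace

private lemma icp_aux
    (γ : ℝ → EuclideanSpace ℝ (Fin 2)) (κ : ℝ) (hκ : 0 ≤ κ)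
    (hγ : ContDiff ℝ 2 γ)
    (hspeed : ∀ s, ‖deriv γ s‖ = 1)
    (hcurv : ∀ s, ‖deriv (deriv γ) s‖ ≤ κ)
    (a b : ℝ) (hab : a ≤ b) :
    b - a - κ / 2 * (b - a) ^ 2 ≤ ‖γ b - γ a‖ := by
  have hd1 : Differentiable ℝ γ := hγ.differentiable (by norm_num)
  have h11 : ContDiff ℝ ((1 : WithTop ℕ∞) + 1) γ := by
    have : ((1 : WithTop ℕ∞) + 1) = 2 := by norm_num
    rw [this]; exact hγ
  have hd2 : Differentiable ℝ (deriv γ) :=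
    ((contDiff_succ_iff_deriv.mp h11).2.2).differentiable (by norm_num)
  set v := deriv γ a with hv
  have hvnorm : ‖v‖ = 1 := hspeed a
  -- Lipschitz bound on deriv γ
  have hlip : ∀ s ∈ Icc a b, ‖deriv γ s - v‖ ≤ κ * (s - a) := by
    intro s hs
    exact norm_image_sub_le_of_norm_deriv_le_segment'
      (fun x _ => ((hd2 x).hasDerivAt).hasDerivWithinAt)
      (fun x _ => hcurv x) s hs
  -- lower bound on inner product of deriv with v
  have key : ∀ s ∈ Icc a b, 1 - κ * (s - a) ≤ ⟪deriv γ s, v⟫ := by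
    intro s hs
    have h1 : ⟪deriv γ s, v⟫ = ⟪v, v⟫ + ⟪deriv γ s - v, v⟫ := by
      rw [inner_sub_left]; ring
    have h2 : ⟪v, v⟫ = 1 := by
      rw [real_inner_self_eq_norm_sq, hvnorm]; norm_num
    have h3 : -(κ * (s - a)) ≤ ⟪deriv γ s - v, v⟫ := by
      have := abs_real_inner_le_norm (deriv γ s - v) v
      rw [hvnorm, mul_one] at this
      have := neg_le_of_abs_le this
      linarith [hlip s hs]
    rw [h1, h2]; linarith
  -- the function g
  set f : ℝ → ℝ := fun s => ⟪γ s, v⟫ with hf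
  have hfd : ∀ s, HasDerivAt f ⟪deriv γ s, v⟫ s := by
    intro s
    have := HasDerivAt.inner ℝ ((hd1 s).hasDerivAt) (hasDerivAt_const s v)
    rw [hf]
    simpa only [inner_zero_right, zero_add, add_zero] using this
  set g : ℝ → ℝ := fun s => f s - s + κ / 2 * (s - a) ^ 2 with hg
  have hgd : ∀ s, HasDerivAt g (⟪deriv γ s, v⟫ - 1 + κ * (s - a)) s := by
    intro s
    have h1 := (hfd s).sub (hasDerivAt_id s)
    have h2 : HasDerivAt (fun s => κ / 2 * (s - a) ^ 2) (κ / 2 * (2 * (s - a))) s := by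
      have : HasDerivAt (fun s : ℝ => (s - a) ^ 2) (2 * (s - a) ^ 1 * 1) s :=
        (((hasDerivAt_id s).sub_const a).pow 2)
      simpa using this.const_mul (κ / 2)
    have := h1.add h2
    exact this.congr_deriv (by ring)
  have hmono : MonotoneOn g (Icc a b) := by
    apply monotoneOn_of_deriv_nonneg (convex_Icc a b)
    · have hcf : Continuous f := by
        rw [hf]; exact hd1.continuous.inner continuous_const
      have hcg : Continuous g := by
        rw [hg]
        exact (hcf.sub continuous_id).add
          (continuous_const.mul ((continuous_id.sub continuous_const).pow 2))
      exact hcg.continuousOn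
    · intro s _
      exact ((hgd s).differentiableAt).differentiableWithinAt
    · intro s hs
      rw [interior_Icc] at hs
      rw [(hgd s).deriv]
      have := key s ⟨le_of_lt hs.1, le_of_lt hs.2⟩
      linarith
  have hga : g a = f a - a := by simp [hg]
  have hgb : g b = f b - b + κ / 2 * (b - a) ^ 2 := by simp [hg]
  have hmono' := hmono (left_mem_Icc.mpr hab) (right_mem_Icc.mpr hab) hab
  rw [hga, hgb] at hmono'
  have hinner : ⟪γ b - γ a, v⟫ = f b - f a := by
    simp [hf, inner_sub_left]
  have hcs : ⟪γ b - γ a, v⟫ ≤ ‖γ b - γ a‖ := by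
    have := real_inner_le_norm (γ b - γ a) v
    rwa [hvnorm, mul_one] at this
  linarith

/-- Chord-length lower bound: for a unit-speed C² planar curve with curvature
bounded by κ, the chord length satisfies
`‖γ(s_j) - γ(s_i)‖ ≥ |s_j - s_i| - (κ/2)·(s_j - s_i)²`. -/
theorem icp_chord_length_lower_bound
    (γ : ℝ → EuclideanSpace ℝ (Fin 2)) (κ : ℝ) (hκ : 0 ≤ κ)
    (hγ : ContDiff ℝ 2 γ)
    (hspeed : ∀ s, ‖deriv γ s‖ = 1)
    (hcurv : ∀ s, ‖deriv (deriv γ) s‖ ≤ κ)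
    (s_i s_j : ℝ) :
    ‖γ s_j - γ s_i‖ ≥ |s_j - s_i| - κ / 2 * (s_j - s_i) ^ 2 := by
  rcases le_total s_i s_j with h | h
  · have := icp_aux γ κ hκ hγ hspeed hcurv s_i s_j h
    rw [abs_of_nonneg (by linarith : (0:ℝ) ≤ s_j - s_i)]
    linarith
  · have := icp_aux γ κ hκ hγ hspeed hcurv s_j s_i h
    rw [abs_of_nonpos (by linarith : s_j - s_i ≤ 0), norm_sub_rev]
    have hsq : (s_j - s_i) ^ 2 = (s_i - s_j) ^ 2 := by ring
    rw [hsq]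
    linarith
end

section
/- Let γ : ℝ → ℝ² be a twice continuously differentiable curve parameterized by arc length (i.e. ‖γ'(s)‖ = 1 for all s) whose curvature is bounded by κ ≥ 0 (i.e. ‖γ''(s)‖ ≤ κ for all s). Let s_i, s_j ∈ ℝ, set a_i := γ(s_i) and a_j := γ(s_j), and let p ∈ ℝ² satisfy ‖p − a_j‖ ≤ ‖p − a_i‖. If κ·|s_i − s_j| ≤ 1, then |s_i − s_j| ≤ 4·‖p − a_i‖. -/
open scoped RealInnerProductSpace

lemma chord_aux
    (γ : ℝ → EuclideanSpace ℝ (Fin 2)) (κ : ℝ) (hκ : 0 ≤ κ)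
    (hγ : ContDiff ℝ 2 γ)
    (hspeed : ∀ s, ‖deriv γ s‖ = 1)
    (hcurv : ∀ s, ‖deriv (deriv γ) s‖ ≤ κ)
    (s t : ℝ) (hts : t ≤ s) (hsep : κ * (s - t) ≤ 1) :
    s - t ≤ 2 * ‖γ s - γ t‖ := by
  have hγ' : ContDiff ℝ 1 (deriv γ) := by
    exact (contDiff_succ_iff_deriv.mp (by exact_mod_cast hγ : ContDiff ℝ (1+1) γ)).2.2
  have hd1 : Differentiable ℝ γ := hγ.differentiable (by norm_num)
  have hd2 : Differentiable ℝ (deriv γ) := hγ'.differentiable (by norm_num)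
  set Δ := s - t with hΔ
  have hΔ0 : 0 ≤ Δ := by linarith
  set m := (s + t) / 2 with hm
  set v := deriv γ m with hv
  -- Lipschitz bound on deriv γ
  have hlip : ∀ u ∈ Set.Icc t s, ‖deriv γ u - v‖ ≤ κ * (Δ / 2) := by
    intro u hu
    have h1 : ‖deriv γ u - deriv γ m‖ ≤ κ * ‖u - m‖ := by
      apply Convex.norm_image_sub_le_of_norm_deriv_le
        (fun x _ => hd2 x) (fun x _ => hcurv x) convex_univ trivial trivial
    refine h1.trans ?_
    have : ‖u - m‖ ≤ Δ / 2 := by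
      rw [Real.norm_eq_abs, abs_le]
      constructor <;> simp only [hm, hΔ] <;> cases' hu with h1 h2 <;> [linarith; linarith]
    nlinarith [hκ]
  -- the function f u = ⟪γ u, v⟫ - u
  set f : ℝ → ℝ := fun u => ⟪γ u, v⟫ - u with hf
  have hfd : ∀ u, HasDerivAt f (⟪deriv γ u, v⟫ - 1) u := by
    intro u
    have h1 : HasDerivAt (fun u => ⟪γ u, v⟫) ⟪deriv γ u, v⟫ u := by
      have := (HasDerivAt.inner ℝ ((hd1 u).hasDerivAt) (hasDerivAt_const u v))
      simpa using this
    exact h1.sub (hasDerivAt_id u)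
  -- bound on f'
  have hfb : ∀ u ∈ Set.Icc t s, ‖⟪deriv γ u, v⟫ - 1‖ ≤ κ^2 * Δ^2 / 8 := by
    intro u hu
    have hu1 : ‖deriv γ u‖ = 1 := hspeed u
    have hv1 : ‖v‖ = 1 := hspeed m
    have hsq : ‖deriv γ u - v‖^2 = 2 - 2 * ⟪deriv γ u, v⟫ := by
      rw [norm_sub_sq_real, hu1, hv1]; ring
    have hl := hlip u hu
    have h2 : ‖deriv γ u - v‖^2 ≤ (κ * (Δ/2))^2 := by
      apply sq_le_sq' <;> nlinarith [norm_nonneg (deriv γ u - v)]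
    have h3 : ⟪deriv γ u, v⟫ ≤ 1 := by
      calc ⟪deriv γ u, v⟫ ≤ ‖deriv γ u‖ * ‖v‖ := real_inner_le_norm _ _
        _ = 1 := by rw [hu1, hv1]; ring
    rw [Real.norm_eq_abs, abs_le]
    constructor
    · nlinarith [hsq, h2]
    · nlinarith [sq_nonneg (κ * Δ)]
  -- mean value inequality on [t,s]
  have hmv : ‖f s - f t‖ ≤ (κ^2 * Δ^2 / 8) * ‖s - t‖ := by
    apply Convex.norm_image_sub_le_of_norm_hasDerivWithin_le
      (fun x _ => (hfd x).hasDerivWithinAt) (fun x hx => hfb x hx)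
      (convex_Icc t s) ⟨le_rfl, hts⟩ ⟨hts, le_rfl⟩
  have hst : ‖s - t‖ = Δ := by rw [Real.norm_eq_abs, abs_of_nonneg hΔ0]
  rw [hst, Real.norm_eq_abs] at hmv
  have hfs : f s - f t = ⟪γ s - γ t, v⟫ - Δ := by
    simp only [hf, inner_sub_left, hΔ]; ring
  have hib : ⟪γ s - γ t, v⟫ ≤ ‖γ s - γ t‖ := by
    calc ⟪γ s - γ t, v⟫ ≤ ‖γ s - γ t‖ * ‖v‖ := real_inner_le_norm _ _
      _ = ‖γ s - γ t‖ := by rw [hspeed m]; ring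
  have habs := abs_le.mp hmv
  clear_value Δ m v f
  have hkd : 0 ≤ κ * Δ := mul_nonneg hκ hΔ0
  have hk2 : κ^2 * Δ^2 ≤ 1 := by nlinarith [mul_le_mul_of_nonneg_left hsep hkd]
  have hΔ3 : κ^2 * Δ^2 / 8 * Δ ≤ Δ / 8 := by nlinarith [mul_le_mul_of_nonneg_right hk2 hΔ0]
  linarith [habs.1, hfs.ge, hfs.le, hib, hΔ3]


/-- Rematching lemma: if the displaced point `p` is at least as close to
`a_j = γ(s_j)` as to `a_i = γ(s_i)` and the arc-length separation is at most one
curvature radius, then `|s_i - s_j| ≤ 4·‖p - a_i‖`. -/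
theorem icp_rematching_arclength_bound
    (γ : ℝ → EuclideanSpace ℝ (Fin 2)) (κ : ℝ) (hκ : 0 ≤ κ)
    (hγ : ContDiff ℝ 2 γ)
    (hspeed : ∀ s, ‖deriv γ s‖ = 1)
    (hcurv : ∀ s, ‖deriv (deriv γ) s‖ ≤ κ)
    (s_i s_j : ℝ) (a_i a_j : EuclideanSpace ℝ (Fin 2))
    (ha_i : a_i = γ s_i) (ha_j : a_j = γ s_j)
    (p : EuclideanSpace ℝ (Fin 2))
    (hp : ‖p - a_j‖ ≤ ‖p - a_i‖)
    (hsep : κ * |s_i - s_j| ≤ 1) :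
    |s_i - s_j| ≤ 4 * ‖p - a_i‖ := by
  subst ha_i ha_j
  have key : |s_i - s_j| ≤ 2 * ‖γ s_i - γ s_j‖ := by
    rcases le_total s_j s_i with h | h
    · rw [abs_of_nonneg (by linarith)]
      exact chord_aux γ κ hκ hγ hspeed hcurv s_i s_j h
        (by rwa [abs_of_nonneg (by linarith)] at hsep)
    · rw [abs_of_nonpos (by linarith), norm_sub_rev]
      have := chord_aux γ κ hκ hγ hspeed hcurv s_j s_i h
        (by rw [abs_of_nonpos (by linarith)] at hsep; linarith)
      linarith
  have htri : ‖γ s_i - γ s_j‖ ≤ ‖p - γ s_j‖ + ‖p - γ s_i‖ := by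
    have : γ s_i - γ s_j = (p - γ s_j) - (p - γ s_i) := by abel
    rw [this]
    exact norm_sub_le _ _
  linarith
end

section
/- Let γ : ℝ → ℝ² be a twice continuously differentiable curve parameterized by arc length (i.e. ‖γ'(s)‖ = 1 for all s) whose curvature is bounded by κ ≥ 0 (i.e. ‖γ''(s)‖ ≤ κ for all s). Let s_i, s_j ∈ ℝ with κ·|s_i − s_j| ≤ 1, set a_i := γ(s_i) and a_j := γ(s_j), let n ∈ ℝ² be a unit vector with γ'(s_i) ⬝ n = 0, and let p ∈ ℝ² satisfy ‖p − a_j‖ ≤ ‖p − a_i‖. Then the approximation error ψ := (a_i − a_j) ⬝ n satisfies |ψ| ≤ 8·κ·‖p − a_i‖². -/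
open RealInnerProductSpace

open intervalIntegral in
private lemma taylor2_bound {E : Type*} [NormedAddCommGroup E] [NormedSpace ℝ E]
    [CompleteSpace E]
    (γ : ℝ → E) (κ : ℝ) (hκ : 0 ≤ κ) (hγ : ContDiff ℝ 2 γ)
    (hcurv : ∀ s, ‖deriv (deriv γ) s‖ ≤ κ) (a b : ℝ) :
    ‖γ b - γ a - (b - a) • deriv γ a‖ ≤ κ / 2 * (b - a) ^ 2 := by
  have h2 : (2 : WithTop ℕ∞) = 1 + 1 := by norm_num
  have hγ' : Differentiable ℝ γ ∧ _ ∧ ContDiff ℝ 1 (deriv γ) :=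
    contDiff_succ_iff_deriv.mp (h2 ▸ hγ)
  have hd1 : Differentiable ℝ γ := hγ'.1
  have hd2 : Differentiable ℝ (deriv γ) := hγ'.2.2.differentiable one_ne_zero
  have hcont : Continuous (deriv γ) := hγ'.2.2.continuous
  -- Lipschitz bound on deriv γ
  have hlip : ∀ t : ℝ, ‖deriv γ t - deriv γ a‖ ≤ κ * abs (t - a) := by
    intro t
    have := Convex.norm_image_sub_le_of_norm_deriv_le (f := deriv γ) (s := Set.univ)
      (fun x _ => hd2 x) (fun x _ => hcurv x) convex_univ (Set.mem_univ a) (Set.mem_univ t)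
    simpa [Real.norm_eq_abs] using this
  -- integral representation
  have hint : IntervalIntegrable (deriv γ) MeasureTheory.volume a b :=
    hcont.intervalIntegrable a b
  have hrep : γ b - γ a = ∫ t in a..b, deriv γ t :=
    (integral_deriv_eq_sub (fun x _ => hd1 x) hint).symm
  have hconst : (b - a) • deriv γ a = ∫ _ in a..b, deriv γ a := (integral_const _).symm
  have hsub : γ b - γ a - (b - a) • deriv γ a = ∫ t in a..b, (deriv γ t - deriv γ a) := by
    rw [hrep, hconst, integral_sub hint (intervalIntegrable_const)]
  rw [hsub]
  have hbnd : ‖∫ t in a..b, (deriv γ t - deriv γ a)‖ ≤ |∫ t in a..b, κ * abs (t - a)| := by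
    apply norm_integral_le_abs_of_norm_le
    · filter_upwards with t using hlip t
    · exact (Continuous.intervalIntegrable (by fun_prop) a b)
  refine hbnd.trans ?_
  -- compute the integral
  have key : ∫ t in a..b, κ * abs (t - a) = κ * ((b - a) * |b - a|) / 2 := by
    rcases le_total a b with hab | hab
    · have : ∫ t in a..b, κ * abs (t - a) = ∫ t in a..b, κ * (t - a) := by
        apply integral_congr
        intro t ht
        rw [Set.uIcc_of_le hab] at ht
        show κ * |t - a| = κ * (t - a)
        rw [abs_of_nonneg (by linarith [ht.1] : (0:ℝ) ≤ t - a)]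
      rw [this, integral_const_mul, integral_sub (intervalIntegrable_id) intervalIntegrable_const,
        integral_id, integral_const, abs_of_nonneg (by linarith : (0:ℝ) ≤ b - a)]
      simp only [smul_eq_mul]
      ring
    · have : ∫ t in a..b, κ * abs (t - a) = ∫ t in a..b, κ * (a - t) := by
        apply integral_congr
        intro t ht
        rw [Set.uIcc_of_ge hab] at ht
        show κ * |t - a| = κ * (a - t)
        rw [abs_of_nonpos (by linarith [ht.2] : t - a ≤ 0), neg_sub]
      rw [this, integral_const_mul, integral_sub intervalIntegrable_const (intervalIntegrable_id),
        integral_id, integral_const, abs_of_nonpos (by linarith : b - a ≤ 0)]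
      simp only [smul_eq_mul]
      ring
  rw [key]
  rcases le_total a b with hab | hab
  · rw [abs_of_nonneg (by linarith : (0:ℝ) ≤ b - a), abs_of_nonneg]
    · nlinarith [sq_nonneg (b - a)]
    · nlinarith [sq_nonneg (b - a)]
  · rw [abs_of_nonpos (by linarith : b - a ≤ 0)]
    rw [abs_of_nonpos]
    · nlinarith [sq_nonneg (b - a)]
    · nlinarith [sq_nonneg (b - a)]

set_option maxHeartbeats 1000000 in
/-- The Proposition: the term-wise discrepancy `ψ = (a_i - a_j) ⬝ n` between the
fixed-matching point-to-plane ICP cost and the true (rematched) ICP cost is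
second order in the displacement: `|ψ| ≤ 8·κ·‖p - a_i‖²`. -/
theorem icp_point_to_plane_discrepancy_bound
    (γ : ℝ → EuclideanSpace ℝ (Fin 2)) (κ : ℝ) (hκ : 0 ≤ κ)
    (hγ : ContDiff ℝ 2 γ)
    (hspeed : ∀ s, ‖deriv γ s‖ = 1)
    (hcurv : ∀ s, ‖deriv (deriv γ) s‖ ≤ κ)
    (s_i s_j : ℝ) (hsep : κ * |s_i - s_j| ≤ 1)
    (a_i a_j : EuclideanSpace ℝ (Fin 2))
    (ha_i : a_i = γ s_i) (ha_j : a_j = γ s_j)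
    (n : EuclideanSpace ℝ (Fin 2)) (hn : ‖n‖ = 1) (hperp : ⟪deriv γ s_i, n⟫ = 0)
    (p : EuclideanSpace ℝ (Fin 2)) (hp : ‖p - a_j‖ ≤ ‖p - a_i‖)
    (ψ : ℝ) (hψ : ψ = ⟪a_i - a_j, n⟫) :
    |ψ| ≤ 8 * κ * ‖p - a_i‖ ^ 2 := by
  set h : ℝ := s_j - s_i with hh
  set v := deriv γ s_i with hv
  set R := γ s_j - γ s_i - h • v with hR
  clear_value h v R
  have hRnorm : ‖R‖ ≤ κ / 2 * h ^ 2 := by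
    rw [hR, hh, hv]
    exact taylor2_bound γ κ hκ hγ hcurv s_i s_j
  -- ψ = -⟪R, n⟫
  have hψR : ψ = -⟪R, n⟫ := by
    have : a_i - a_j = -(h • v) - R := by
      rw [ha_i, ha_j, hR]; abel
    rw [hψ, this, inner_sub_left, inner_neg_left, real_inner_smul_left, hperp]
    ring
  have habs : |ψ| ≤ κ / 2 * h ^ 2 := by
    rw [hψR, abs_neg]
    calc |⟪R, n⟫| ≤ ‖R‖ * ‖n‖ := abs_real_inner_le_norm R n
      _ = ‖R‖ := by rw [hn, mul_one]
      _ ≤ κ / 2 * h ^ 2 := hRnorm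
  -- bound on |h|
  set d := ‖p - a_i‖ with hd
  clear_value d
  have hd0 : 0 ≤ d := hd ▸ norm_nonneg _
  have htri : ‖a_j - a_i‖ ≤ 2 * d := by
    calc ‖a_j - a_i‖ = ‖(a_j - p) + (p - a_i)‖ := by abel_nf
      _ ≤ ‖a_j - p‖ + ‖p - a_i‖ := norm_add_le _ _
      _ = ‖p - a_j‖ + ‖p - a_i‖ := by rw [norm_sub_rev]
      _ ≤ 2 * d := by rw [hd]; linarith
  have hlower : |h| - κ / 2 * h ^ 2 ≤ ‖a_j - a_i‖ := by
    have heq : a_j - a_i = h • v + R := by rw [ha_i, ha_j, hR]; abel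
    have key2 : ‖h • v‖ ≤ ‖h • v + R‖ + ‖R‖ := by
      calc ‖h • v‖ = ‖(h • v + R) - R‖ := by rw [add_sub_cancel_right]
        _ ≤ ‖h • v + R‖ + ‖R‖ := norm_sub_le _ _
    rw [heq]
    have hhv : ‖h • v‖ = |h| := by
      rw [norm_smul, Real.norm_eq_abs, hv, hspeed s_i, mul_one]
    rw [hhv] at key2
    linarith [hRnorm]
  have hsep' : κ * |h| ≤ 1 := by
    rw [hh, ← abs_sub_comm]; exact hsep
  have habs_h : |h| ≤ 4 * d := by
    have h1 : |h| - κ / 2 * h ^ 2 ≥ |h| / 2 := by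
      have : κ / 2 * h ^ 2 ≤ |h| / 2 := by
        have hsq : h ^ 2 = |h| * |h| := by rw [← sq_abs, sq]
        rw [hsq]
        nlinarith [abs_nonneg h]
      linarith
    linarith [hlower.trans htri]
  have hh2 : h ^ 2 ≤ 16 * d ^ 2 := by
    have hsq : h ^ 2 = |h| * |h| := by rw [← sq_abs, sq]
    rw [hsq]
    nlinarith [abs_nonneg h]
  calc |ψ| ≤ κ / 2 * h ^ 2 := habs
    _ ≤ 8 * κ * d ^ 2 := by
      have := mul_le_mul_of_nonneg_left hh2 hκ
      linarith
end

section
/- Let γ : ℝ → ℝ² be a twice continuously differentiable curve parameterized by arc length (i.e. ‖γ'(s)‖ = 1 for all s) whose curvature is bounded by κ ≥ 0 (i.e. ‖γ''(s)‖ ≤ κ for all s). Let s_i, s_j ∈ ℝ with κ·|s_i − s_j| ≤ 1, set a_i := γ(s_i) and a_j := γ(s_j), let n ∈ ℝ² be a unit vector with γ'(s_i) ⬝ n = 0, let δ ∈ ℝ² be a displacement vector, and suppose the displaced point p := a_i + δ satisfies ‖p − a_j‖ ≤ ‖p − a_i‖. Then the true (rematched) point-to-plane cost term differs from the fixed-matching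 cost term by at most third order in ‖δ‖: |((a_i + δ − a_j) ⬝ n)² − (δ ⬝ n)²| ≤ 16·κ·‖δ‖³ + 64·κ²·‖δ‖⁴. -/
set_option maxHeartbeats 1000000


open RealInnerProductSpace

section Aux

variable {E : Type*} [NormedAddCommGroup E] [NormedSpace ℝ E]

/-- One-sided quadratic Taylor remainder bound from a Lipschitz derivative. -/
lemma taylor_aux_le (f f' : ℝ → E) (κ : ℝ)
    (hd : ∀ t, HasDerivAt f (f' t) t)
    (hlip : ∀ a b : ℝ, ‖f' b - f' a‖ ≤ κ * |b - a|)
    {x y : ℝ} (hxy : x ≤ y) :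
    ‖f y - f x - (y - x) • f' x‖ ≤ κ / 2 * (y - x) ^ 2 := by
  set g : ℝ → E := fun t => f t - f x - (t - x) • f' x with hg
  have hgd : ∀ t, HasDerivAt g (f' t - f' x) t := by
    intro t
    have h1 : HasDerivAt (fun t : ℝ => (t - x) • f' x) ((1 : ℝ) • f' x) t :=
      (((hasDerivAt_id t).sub_const x).smul_const (f' x))
    exact (((hd t).sub_const (f x)).sub h1).congr_deriv (by simp)
  have key : ∀ ⦃z⦄, z ∈ Set.Icc x y → ‖g z‖ ≤ κ / 2 * (z - x) ^ 2 := by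
    refine image_norm_le_of_norm_deriv_right_le_deriv_boundary
      (f := g) (f' := fun t => f' t - f' x)
      (B := fun t => κ / 2 * (t - x) ^ 2) (B' := fun t => κ * (t - x))
      ?_ ?_ ?_ ?_ ?_
    · exact fun t _ => ((hgd t).continuousAt).continuousWithinAt
    · exact fun t _ => (hgd t).hasDerivWithinAt
    · simp [hg]
    · intro t
      have h1 : HasDerivAt (fun t : ℝ => (t - x) ^ 2) (2 * (t - x) * 1) t :=
        (((hasDerivAt_id t).sub_const x).pow 2).congr_deriv (by simp only [id_eq]; ring)
      have h2 := h1.const_mul (κ / 2)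
      exact h2.congr_deriv (by ring)
    · intro t ht
      have := hlip x t
      have habs : |t - x| = t - x := abs_of_nonneg (by linarith [ht.1])
      calc ‖f' t - f' x‖ ≤ κ * |t - x| := this
        _ = κ * (t - x) := by rw [habs]
  have := key (Set.right_mem_Icc.mpr hxy)
  simpa [hg] using this

/-- Two-sided quadratic Taylor remainder bound from a Lipschitz derivative. -/
lemma taylor_aux (f f' : ℝ → E) (κ : ℝ)
    (hd : ∀ t, HasDerivAt f (f' t) t)
    (hlip : ∀ a b : ℝ, ‖f' b - f' a‖ ≤ κ * |b - a|)
    (x y : ℝ) :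
    ‖f y - f x - (y - x) • f' x‖ ≤ κ / 2 * (y - x) ^ 2 := by
  rcases le_total x y with hxy | hyx
  · exact taylor_aux_le f f' κ hd hlip hxy
  · -- apply the one-sided lemma to `t ↦ f (-t)` on `[-x, -y]`
    set F : ℝ → E := fun t => f (-t) with hF
    set F' : ℝ → E := fun t => -f' (-t) with hF'
    have hdF : ∀ t, HasDerivAt F (F' t) t := by
      intro t
      have := (hd (-t)).scomp t (hasDerivAt_neg t)
      simpa [hF, hF', Function.comp_def] using this
    have hlipF : ∀ a b : ℝ, ‖F' b - F' a‖ ≤ κ * |b - a| := by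
      intro a b
      have := hlip (-b) (-a)
      have h1 : ‖F' b - F' a‖ = ‖f' (-a) - f' (-b)‖ := by
        show ‖-f' (-b) - -f' (-a)‖ = _
        rw [show -f' (-b) - -f' (-a) = f' (-a) - f' (-b) from by abel]
      rw [h1]
      calc ‖f' (-a) - f' (-b)‖ ≤ κ * |(-a) - (-b)| := hlip (-b) (-a)
        _ = κ * |b - a| := by rw [show (-a) - (-b) = -(a - b) by ring, abs_neg, abs_sub_comm]
    have hxy' : -x ≤ -y := neg_le_neg hyx
    have := taylor_aux_le F F' κ hdF hlipF hxy'
    have heq : F (-y) - F (-x) - (-y - -x) • F' (-x) = f y - f x - (y - x) • f' x := by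
      show f (- -y) - f (- -x) - (-y - -x) • -f' (- -x) = _
      rw [neg_neg, neg_neg, smul_neg,
        show (-y - -x : ℝ) = -(y - x) from by ring, neg_smul, neg_neg]
    have heq2 : ((-y) - (-x)) ^ 2 = (y - x) ^ 2 := by ring
    rw [heq, heq2] at this
    exact this

end Aux

/-- Term-wise form of Theorem 1: after rematching of the displaced point
`p = a_i + δ` to `a_j`, the true point-to-plane cost term `((a_i + δ - a_j) ⬝ n)²`
differs from the fixed-matching cost term `(δ ⬝ n)²` by at most third order
in `‖δ‖`. -/
theorem icp_point_to_plane_cost_term_bound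
    (γ : ℝ → EuclideanSpace ℝ (Fin 2)) (κ : ℝ) (hκ : 0 ≤ κ)
    (hγ : ContDiff ℝ 2 γ)
    (hspeed : ∀ s, ‖deriv γ s‖ = 1)
    (hcurv : ∀ s, ‖deriv (deriv γ) s‖ ≤ κ)
    (s_i s_j : ℝ) (hsep : κ * |s_i - s_j| ≤ 1)
    (a_i a_j : EuclideanSpace ℝ (Fin 2))
    (ha_i : a_i = γ s_i) (ha_j : a_j = γ s_j)
    (n : EuclideanSpace ℝ (Fin 2)) (hn : ‖n‖ = 1) (hperp : ⟪deriv γ s_i, n⟫ = 0)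
    (δ : EuclideanSpace ℝ (Fin 2)) (p : EuclideanSpace ℝ (Fin 2)) (hpdef : p = a_i + δ)
    (hp : ‖p - a_j‖ ≤ ‖p - a_i‖) :
    |(⟪a_i + δ - a_j, n⟫) ^ 2 - (⟪δ, n⟫) ^ 2| ≤
      16 * κ * ‖δ‖ ^ 3 + 64 * κ ^ 2 * ‖δ‖ ^ 4 := by
  have hdiff : Differentiable ℝ γ := hγ.differentiable (by norm_num)
  have hdiff' : Differentiable ℝ (deriv γ) := by
    have h2 : ContDiff ℝ (1 + 1) γ := by
      have : ((1 : WithTop ℕ∞) + 1) = 2 := by norm_num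
      rw [this]; exact hγ
    exact (contDiff_succ_iff_deriv.mp h2).2.2.differentiable one_ne_zero
  -- Lipschitz bound on the derivative
  have hlip : ∀ a b : ℝ, ‖deriv γ b - deriv γ a‖ ≤ κ * |b - a| := by
    intro a b
    have := Convex.norm_image_sub_le_of_norm_deriv_le (s := (Set.univ : Set ℝ))
      (fun t _ => hdiff' t) (fun t _ => hcurv t) convex_univ (Set.mem_univ a) (Set.mem_univ b)
    simpa using this
  -- Taylor remainder
  have hTay : ‖γ s_j - γ s_i - (s_j - s_i) • deriv γ s_i‖ ≤ κ / 2 * (s_j - s_i) ^ 2 :=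
    taylor_aux γ (deriv γ) κ (fun t => (hdiff t).hasDerivAt) hlip s_i s_j
  set d : ℝ := s_j - s_i with hd
  set Δ : EuclideanSpace ℝ (Fin 2) := a_j - a_i with hΔ
  clear_value d Δ
  have hΔγ : Δ = γ s_j - γ s_i := by rw [hΔ, ha_i, ha_j]
  have hR : ‖Δ - d • deriv γ s_i‖ ≤ κ / 2 * d ^ 2 := by rw [hΔγ]; exact hTay
  -- ‖Δ‖ ≤ 2‖δ‖
  have hΔδ : ‖Δ‖ ≤ 2 * ‖δ‖ := by
    have h1 : ‖p - a_j‖ = ‖δ - Δ‖ := by rw [hpdef, hΔ]; congr 1; abel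
    have h2 : ‖p - a_i‖ = ‖δ‖ := by rw [hpdef]; congr 1; abel
    rw [h1, h2] at hp
    calc ‖Δ‖ = ‖(δ - Δ) - δ‖ := by rw [← norm_neg]; congr 1; abel
      _ ≤ ‖δ - Δ‖ + ‖δ‖ := norm_sub_le _ _
      _ ≤ ‖δ‖ + ‖δ‖ := by linarith
      _ = 2 * ‖δ‖ := by ring
  -- |d| ≤ 2‖Δ‖
  have hsep' : κ * |d| ≤ 1 := by rwa [hd, abs_sub_comm]
  have hdΔ : |d| ≤ 2 * ‖Δ‖ := by
    have h1 : ‖d • deriv γ s_i‖ = |d| := by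
      rw [norm_smul, hspeed, Real.norm_eq_abs, mul_one]
    have h2 : |d| ≤ ‖Δ‖ + κ / 2 * d ^ 2 := by
      calc |d| = ‖d • deriv γ s_i‖ := h1.symm
        _ = ‖Δ - (Δ - d • deriv γ s_i)‖ := by congr 1; abel
        _ ≤ ‖Δ‖ + ‖Δ - d • deriv γ s_i‖ := norm_sub_le _ _
        _ ≤ ‖Δ‖ + κ / 2 * d ^ 2 := by linarith
    have h3 : κ / 2 * d ^ 2 ≤ |d| / 2 := by
      have : κ / 2 * d ^ 2 = (κ * |d|) * |d| / 2 := by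
        rw [sq, ← abs_mul_abs_self d]; ring
      rw [this]
      have habs : 0 ≤ |d| := abs_nonneg d
      nlinarith
    linarith
  have hd4δ : |d| ≤ 4 * ‖δ‖ := by linarith
  -- inner product bounds
  have hΔn : |⟪Δ, n⟫| ≤ 8 * κ * ‖δ‖ ^ 2 := by
    have h1 : ⟪Δ, n⟫ = ⟪Δ - d • deriv γ s_i, n⟫ := by
      have : ⟪Δ - d • deriv γ s_i, n⟫ = ⟪Δ, n⟫ - d * ⟪deriv γ s_i, n⟫ := by
        rw [inner_sub_left, real_inner_smul_left]
      rw [this, hperp]; ring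
    have h2 : |⟪Δ - d • deriv γ s_i, n⟫| ≤ ‖Δ - d • deriv γ s_i‖ * ‖n‖ :=
      abs_real_inner_le_norm _ _
    have hδ0 : 0 ≤ ‖δ‖ := norm_nonneg δ
    have h3 : d ^ 2 ≤ 16 * ‖δ‖ ^ 2 := by
      have := sq_abs d
      nlinarith [abs_nonneg d]
    rw [h1]
    calc |⟪Δ - d • deriv γ s_i, n⟫| ≤ ‖Δ - d • deriv γ s_i‖ * ‖n‖ := h2
      _ = ‖Δ - d • deriv γ s_i‖ := by rw [hn, mul_one]
      _ ≤ κ / 2 * d ^ 2 := hR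
      _ ≤ 8 * κ * ‖δ‖ ^ 2 := by
          have h4 : κ * d ^ 2 ≤ κ * (16 * ‖δ‖ ^ 2) := mul_le_mul_of_nonneg_left h3 hκ
          linarith
  have hδn : |⟪δ, n⟫| ≤ ‖δ‖ := by
    have := abs_real_inner_le_norm δ n
    rwa [hn, mul_one] at this
  -- final computation
  have hkey : ⟪a_i + δ - a_j, n⟫ = ⟪δ, n⟫ - ⟪Δ, n⟫ := by
    rw [← inner_sub_left]
    congr 1
    rw [hΔ]
    abel
  rw [hkey]
  have hδ0 : 0 ≤ ‖δ‖ := norm_nonneg δ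
  have hexp : (⟪δ, n⟫ - ⟪Δ, n⟫) ^ 2 - ⟪δ, n⟫ ^ 2 = ⟪Δ, n⟫ ^ 2 - 2 * ⟪δ, n⟫ * ⟪Δ, n⟫ := by ring
  rw [hexp]
  have h1 : |⟪Δ, n⟫ ^ 2 - 2 * ⟪δ, n⟫ * ⟪Δ, n⟫| ≤ ⟪Δ, n⟫ ^ 2 + 2 * |⟪δ, n⟫| * |⟪Δ, n⟫| := by
    calc |⟪Δ, n⟫ ^ 2 - 2 * ⟪δ, n⟫ * ⟪Δ, n⟫| ≤ |⟪Δ, n⟫ ^ 2| + |2 * ⟪δ, n⟫ * ⟪Δ, n⟫| :=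
          abs_sub _ _
      _ = ⟪Δ, n⟫ ^ 2 + 2 * |⟪δ, n⟫| * |⟪Δ, n⟫| := by
          rw [abs_of_nonneg (sq_nonneg _), abs_mul, abs_mul]
          simp [abs_of_nonneg]
  have h2 : ⟪Δ, n⟫ ^ 2 ≤ 64 * κ ^ 2 * ‖δ‖ ^ 4 := by
    have := sq_abs ⟪Δ, n⟫
    nlinarith [abs_nonneg ⟪Δ, n⟫]
  have h3 : 2 * |⟪δ, n⟫| * |⟪Δ, n⟫| ≤ 16 * κ * ‖δ‖ ^ 3 := by
    nlinarith [abs_nonneg ⟪δ, n⟫, abs_nonneg ⟪Δ, n⟫]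
  linarith
end
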